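/- arXiv:2305.19566 — 3 statements merged into one kernel-verified Lean document; each statement's English description precedes it below -/
import Mathlib

section
/- Let a ≥ 7 be an integer and ρ the largest real root of x^3 - a x^2 - (a+3)x - 1. For integers v, w with 0 ≤ v ≤ a and v(a+2) + 1 ≤ w ≤ (v+1)(a+1), the algebraic number -v - wρ + (v+1)ρ^2 is totally positive, i.e., σ(-v - wρ + (v+1)ρ^2) > 0 for every real embedding σ of Q(ρ). -/
open IntermediateField

set_option maxHeartbeats 1600000 in
theorem shanks_indecomposables_totally_positive
    (a : ℤ) (ha : 7 ≤ a) (ρ : ℝ)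
    (hroot : ρ^3 - (a:ℝ)*ρ^2 - ((a:ℝ)+3)*ρ - 1 = 0)
    (hmax : ∀ x : ℝ, x^3 - (a:ℝ)*x^2 - ((a:ℝ)+3)*x - 1 = 0 → x ≤ ρ)
    (v w : ℤ) (hv : 0 ≤ v) (hva : v ≤ a)
    (hw1 : v*(a+2)+1 ≤ w) (hw2 : w ≤ (v+1)*(a+1)) :
    ∀ σ : ℚ⟮ρ⟯ →+* ℝ,
      σ (-(v : ℚ⟮ρ⟯) - (w : ℚ⟮ρ⟯) * ⟨ρ, mem_adjoin_simple_self ℚ ρ⟩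
          + ((v : ℚ⟮ρ⟯)+1) * ⟨ρ, mem_adjoin_simple_self ℚ ρ⟩^2) > 0 := by
  intro σ
  -- cast hypotheses to ℝ
  have haR : (7:ℝ) ≤ (a:ℝ) := by exact_mod_cast ha
  have hvR : (0:ℝ) ≤ (v:ℝ) := by exact_mod_cast hv
  have hvaR : (v:ℝ) ≤ (a:ℝ) := by exact_mod_cast hva
  have hw1R : (v:ℝ)*((a:ℝ)+2)+1 ≤ (w:ℝ) := by exact_mod_cast hw1
  have hw2R : (w:ℝ) ≤ ((v:ℝ)+1)*((a:ℝ)+1) := by exact_mod_cast hw2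
  clear ha hv hva hw1 hw2
  -- ρ > a + 1 via the intermediate value theorem
  have hρa : (a:ℝ) + 1 < ρ := by
    have hcont : ContinuousOn (fun x : ℝ => x^3 - (a:ℝ)*x^2 - ((a:ℝ)+3)*x - 1)
        (Set.Icc ((a:ℝ)+1) ((a:ℝ)+2)) := by fun_prop
    have hle : ((a:ℝ)+1) ≤ ((a:ℝ)+2) := by linarith
    have h0mem : (0:ℝ) ∈ Set.Icc (((a:ℝ)+1)^3 - (a:ℝ)*((a:ℝ)+1)^2 - ((a:ℝ)+3)*((a:ℝ)+1) - 1)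
        (((a:ℝ)+2)^3 - (a:ℝ)*((a:ℝ)+2)^2 - ((a:ℝ)+3)*((a:ℝ)+2) - 1) := by
      constructor <;> nlinarith
    obtain ⟨c, hcmem, hcroot0⟩ := intermediate_value_Icc hle hcont h0mem
    have hcroot : c^3 - (a:ℝ)*c^2 - ((a:ℝ)+3)*c - 1 = 0 := hcroot0
    have hcρ : c ≤ ρ := hmax c hcroot
    rcases eq_or_lt_of_le hcmem.1 with h | h
    · exfalso; rw [← h] at hcroot; nlinarith [hcroot]
    · linarith
  have hρpos : 0 < ρ := by linarith
  have hρ1 : (0:ℝ) < 1 + ρ := by linarith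
  -- the element ρ inside ℚ⟮ρ⟯ and its image under σ
  set ρe : ℚ⟮ρ⟯ := ⟨ρ, mem_adjoin_simple_self ℚ ρ⟩ with hρe
  have hre : ρe^3 - (a:ℚ⟮ρ⟯)*ρe^2 - ((a:ℚ⟮ρ⟯)+3)*ρe - 1 = 0 := by
    apply Subtype.ext
    push_cast [hρe]
    exact hroot
  set r : ℝ := σ ρe with hr0
  have hr : r^3 - (a:ℝ)*r^2 - ((a:ℝ)+3)*r - 1 = 0 := by
    have := congrArg σ hre
    simpa [map_sub, map_mul, map_pow, map_intCast, map_one, map_ofNat] using this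
  -- compute the image of the goal expression
  have hgoal : σ (-(v : ℚ⟮ρ⟯) - (w : ℚ⟮ρ⟯) * ρe + ((v : ℚ⟮ρ⟯)+1) * ρe^2)
      = -(v:ℝ) - (w:ℝ)*r + ((v:ℝ)+1)*r^2 := by
    simp [map_add, map_sub, map_mul, map_pow, map_neg, map_intCast, map_one]
    rfl
  rw [hgoal]
  clear_value r
  clear hgoal hre hr0 hρe σ hmax
  -- r is a root of the cubic, which factors over ℝ as
  -- (x - ρ)(x + 1/(1+ρ))(x + (1+ρ)/ρ)
  have hfac : (r - ρ) * ((1+ρ)*r + 1) * (ρ*r + (1+ρ)) = 0 := by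
    linear_combination (ρ*(1+ρ)) * hr - (r^2 + r) * hroot
  -- key identity: ρ(1+ρ)(ρ-(a+1)) = 2ρ+1
  have key : ρ*(1+ρ)*(ρ-((a:ℝ)+1)) = 2*ρ+1 := by linear_combination hroot
  have hρv : (v:ℝ) < ρ := by linarith
  rcases mul_eq_zero.mp hfac with h12 | hC
  · rcases mul_eq_zero.mp h12 with hA | hB
    · -- r = ρ
      have hrρ : r = ρ := by have := sub_eq_zero.mp hA; linarith
      subst hrρ
      have h1 : (w:ℝ)*r ≤ ((v:ℝ)+1)*((a:ℝ)+1)*r := by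
        nlinarith [mul_le_mul_of_nonneg_right hw2R hρpos.le]
      have hA2 : (((v:ℝ)+1)*r^2 - ((v:ℝ)+1)*((a:ℝ)+1)*r - (v:ℝ)) * (1+r)
          = ((v:ℝ)+2)*r + 1 := by linear_combination ((v:ℝ)+1)*key
      have hX : 0 < ((v:ℝ)+1)*r^2 - ((v:ℝ)+1)*((a:ℝ)+1)*r - (v:ℝ) := by
        nlinarith [hA2, hρ1, hρpos, hvR]
      linarith [h1, hX]
    · -- r = -1/(1+ρ)
      have hrB : r * (1+ρ) = -1 := by linarith
      have hsq : r^2 * (1+ρ)^2 = 1 := by linear_combination (r*(1+ρ) - 1) * hrB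
      -- (goal) * (1+ρ)^2 = -v(1+ρ)^2 + w(1+ρ) + (v+1)
      have expand : (-(v:ℝ) - (w:ℝ)*r + ((v:ℝ)+1)*r^2) * (1+ρ)^2
          = -(v:ℝ)*(1+ρ)^2 - (w:ℝ)*(r*(1+ρ))*(1+ρ) + ((v:ℝ)+1)*(r^2*(1+ρ)^2) := by
        ring
      rw [hrB, hsq] at expand
      have h1 : ((v:ℝ)*((a:ℝ)+2)+1)*(1+ρ) ≤ (w:ℝ)*(1+ρ) :=
        mul_le_mul_of_nonneg_right hw1R hρ1.le
      -- (-v(1+ρ)² + (v(a+2)+1)(1+ρ) + (v+1)) · ρ = ρ² + (2-v)ρ - v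
      have hE : (-(v:ℝ)*(1+ρ)^2 + ((v:ℝ)*((a:ℝ)+2)+1)*(1+ρ) + ((v:ℝ)+1)) * ρ
          = ρ^2 + (2-(v:ℝ))*ρ - (v:ℝ) := by linear_combination (-(v:ℝ)) * key
      have hRHS : 0 < ρ^2 + (2-(v:ℝ))*ρ - (v:ℝ) := by
        nlinarith [mul_pos hρpos (by linarith : (0:ℝ) < ρ - (v:ℝ))]
      have hEpos : 0 < -(v:ℝ)*(1+ρ)^2 + ((v:ℝ)*((a:ℝ)+2)+1)*(1+ρ) + ((v:ℝ)+1) := by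
        nlinarith [hE, hRHS, hρpos]
      have step : 0 < -(v:ℝ)*(1+ρ)^2 + (w:ℝ)*(1+ρ) + ((v:ℝ)+1) := by linarith
      have hmul : 0 < (-(v:ℝ) - (w:ℝ)*r + ((v:ℝ)+1)*r^2) * (1+ρ)^2 := by
        rw [expand]; linarith
      nlinarith [hmul, sq_nonneg (1+ρ)]
  · -- r = -(1+ρ)/ρ ≤ -1
    have hrC : ρ * r = -(1+ρ) := by linarith
    have hrle : r ≤ -1 := by nlinarith [hrC, hρpos]
    have hw0 : (1:ℝ) ≤ (w:ℝ) := by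
      nlinarith [mul_nonneg hvR (by linarith : (0:ℝ) ≤ (a:ℝ)+2)]
    have hr2 : 1 ≤ r^2 := by nlinarith [hrle]
    have hwr : (w:ℝ) ≤ -(w:ℝ)*r := by
      nlinarith [mul_le_mul_of_nonneg_left hrle (by linarith : (0:ℝ) ≤ (w:ℝ))]
    have hvr2 : 0 ≤ (v:ℝ)*(r^2 - 1) := mul_nonneg hvR (by linarith)
    nlinarith [hr2, hwr, hvr2]
end

section
/- Let a ≥ 7 be an integer and ρ the smallest real root of x^3 + (a-1)x^2 - a x - 1. For every integer w with 1 ≤ w ≤ a - 1, the element 1 + wρ + ρ^2 is totally positive in Q(ρ). -/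
open IntermediateField

/-- Pure real-analysis core: every real root `x` of the Ennola cubic
`x^3 + (a-1)x^2 - ax - 1` satisfies `1 + w x + x^2 > 0` for `1 ≤ w ≤ a-1`, `a ≥ 7`. -/
lemma ennola_key (a w x : ℝ) (ha : 7 ≤ a) (hw1 : 1 ≤ w) (hw2 : w ≤ a - 1)
    (hx : x^3 + (a-1)*x^2 - a*x - 1 = 0) : 0 < 1 + w*x + x^2 := by
  rcases le_or_gt x (-(a-1)) with h | h
  · -- x ≤ -(a-1) ≤ -w, so x(x+w) ≥ 0
    nlinarith [mul_nonneg (by linarith : (0:ℝ) ≤ -x) (by linarith : (0:ℝ) ≤ -(x+w))]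
  · rcases le_or_gt (a*x+1) 0 with h2 | h2
    · -- no root in the interval [-(a-1), -1/a]: the cubic is positive there
      exfalso
      have hs : a^2*(x^3+(a-1)*x^2-a*x-1) = 0 := by rw [hx]; ring
      have h3 : 0 ≤ ((a*x+1)*(a*x-1))*(x+a-1) := by
        apply mul_nonneg
        · nlinarith
        · linarith
      nlinarith [mul_nonneg (sq_nonneg a) (by linarith : (0:ℝ) ≤ -(a*x+1))]
    · rcases le_or_gt 0 x with hx0 | hx0
      · nlinarith [mul_nonneg (by linarith : (0:ℝ) ≤ w) hx0, sq_nonneg x]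
      · -- -1/a < x < 0, so w x > -(a-1)/a > -1
        nlinarith [mul_nonneg (by linarith : (0:ℝ) ≤ a-1-w) (by linarith : (0:ℝ) ≤ -x),
          sq_nonneg x]

theorem ennola_indecomposables_totally_positive
    (a : ℤ) (ha : 7 ≤ a) (ρ : ℝ)
    (hroot : ρ^3 + ((a:ℝ)-1)*ρ^2 - (a:ℝ)*ρ - 1 = 0)
    (hmin : ∀ x : ℝ, x^3 + ((a:ℝ)-1)*x^2 - (a:ℝ)*x - 1 = 0 → ρ ≤ x)
    (w : ℤ) (hw1 : 1 ≤ w) (hw2 : w ≤ a - 1) :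
    ∀ σ : ℚ⟮ρ⟯ →+* ℝ,
      σ (1 + (w : ℚ⟮ρ⟯) * ⟨ρ, mem_adjoin_simple_self ℚ ρ⟩
          + ⟨ρ, mem_adjoin_simple_self ℚ ρ⟩^2) > 0 := by
  intro σ
  set p : ℚ⟮ρ⟯ := ⟨ρ, mem_adjoin_simple_self ℚ ρ⟩ with hp
  have hcube : p^3 + ((a:ℚ⟮ρ⟯)-1)*p^2 - (a:ℚ⟮ρ⟯)*p - 1 = 0 := by
    apply Subtype.ext
    push_cast
    convert hroot using 2
  have hr : (σ p)^3 + ((a:ℝ)-1)*(σ p)^2 - (a:ℝ)*(σ p) - 1 = 0 := by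
    have := congrArg σ hcube
    simpa [map_add, map_sub, map_mul, map_pow, map_one, map_intCast] using this
  have key := ennola_key (a:ℝ) (w:ℝ) (σ p) (by exact_mod_cast ha)
    (by exact_mod_cast hw1) (by exact_mod_cast hw2) hr
  have hσ : σ (1 + (w : ℚ⟮ρ⟯) * p + p^2) = 1 + (w:ℝ) * σ p + (σ p)^2 := by
    simp [map_add, map_mul, map_pow, map_one, map_intCast]
  rw [hσ]
  linarith
end

section
/- Let a ≥ 7 be an integer and ρ the smallest real root of x^3 - (2a+2)x^2 + a(a+2)x - 1. For every integer w with a ≤ w ≤ 2a - 1, the element -1 + ((a+2)w + 1)ρ - wρ^2 is totally positive in Q(ρ). -/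
open IntermediateField

lemma key_real (a w r : ℝ) (ha : 7 ≤ a) (hw1 : a ≤ w) (hw2 : w ≤ 2*a-1)
    (hr : r^3 - (2*a+2)*r^2 + a*(a+2)*r - 1 = 0) :
    -1 + ((a+2)*w+1)*r - w*r^2 > 0 := by
  have h1 : r*(a-r)*(a+2-r) = 1 := by linarith
  have hgoal : -1 + ((a+2)*w+1)*r - w*r^2 = w*(r*(a+2-r)) + (r-1) := by ring
  rw [hgoal]
  have hw0 : (7:ℝ) ≤ w := le_trans ha hw1
  rcases lt_trichotomy r a with hra | hra | hra
  · -- r < a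
    have hr0 : 0 < r := by
      by_contra h
      push_neg at h
      nlinarith [mul_nonneg (mul_nonneg (neg_nonneg.2 h) (by nlinarith : (0:ℝ) ≤ a - r)) (by nlinarith : (0:ℝ) ≤ a + 2 - r)]
    have har : 0 < a - r := by linarith
    have hpos : r*(a+2-r) = 1/(a-r) := by
      field_simp
      linarith
    rw [hpos]
    rcases le_or_gt 1 r with h | h
    · have : 0 < w * (1/(a-r)) := by positivity
      linarith
    · -- 0 < r < 1
      have hnum : 0 < w + (r-1)*(a-r) := by nlinarith
      have : w * (1/(a-r)) + (r-1) = (w + (r-1)*(a-r))/(a-r) := by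
        field_simp
      rw [this]
      positivity
  · exfalso; rw [hra] at h1; simp at h1
  · -- r > a
    have hr2 : a + 2 < r := by
      by_contra h
      push_neg at h
      nlinarith [mul_nonneg (mul_nonneg (by nlinarith : (0:ℝ) ≤ r) (by nlinarith : (0:ℝ) ≤ r - a)) (by nlinarith : (0:ℝ) ≤ a + 2 - r)]
    have hra' : 0 < r - a := by linarith
    have hpos : r*(a+2-r) = -(1/(r-a)) := by
      field_simp
      linarith
    rw [hpos]
    have hkey : w < (r-1)*(r-a) := by nlinarith [mul_pos (by linarith : (0:ℝ) < r - (a+2)) (by linarith : (0:ℝ) < r - 1)]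
    have : w/(r-a) < r - 1 := by
      rw [div_lt_iff₀ hra']
      nlinarith
    have heq : w * -(1/(r-a)) + (r-1) = (r-1) - w/(r-a) := by ring
    rw [heq]
    linarith

theorem third_family_indecomposables_totally_positive
    (a : ℤ) (ha : 7 ≤ a) (ρ : ℝ)
    (hroot : ρ^3 - (2*(a:ℝ)+2)*ρ^2 + (a:ℝ)*((a:ℝ)+2)*ρ - 1 = 0)
    (hmin : ∀ x : ℝ, x^3 - (2*(a:ℝ)+2)*x^2 + (a:ℝ)*((a:ℝ)+2)*x - 1 = 0 → ρ ≤ x)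
    (w : ℤ) (hw1 : a ≤ w) (hw2 : w ≤ 2*a - 1) :
    ∀ σ : ℚ⟮ρ⟯ →+* ℝ,
      σ (-1 + (((a : ℚ⟮ρ⟯)+2) * (w : ℚ⟮ρ⟯) + 1) * ⟨ρ, mem_adjoin_simple_self ℚ ρ⟩
          - (w : ℚ⟮ρ⟯) * ⟨ρ, mem_adjoin_simple_self ℚ ρ⟩^2) > 0 := by
  intro σ
  set x : ℚ⟮ρ⟯ := ⟨ρ, mem_adjoin_simple_self ℚ ρ⟩ with hxdef
  have hx : x^3 - (2*(a:ℚ⟮ρ⟯)+2)*x^2 + (a:ℚ⟮ρ⟯)*((a:ℚ⟮ρ⟯)+2)*x - 1 = 0 := by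
    have hcoe : ((x^3 - (2*(a:ℚ⟮ρ⟯)+2)*x^2 + (a:ℚ⟮ρ⟯)*((a:ℚ⟮ρ⟯)+2)*x - 1 : ℚ⟮ρ⟯) : ℝ) = 0 := by
      push_cast
      have h2' : ((2:ℚ⟮ρ⟯):ℝ) = 2 := rfl
      rw [h2']
      linarith
    exact_mod_cast hcoe
  have h2 : (σ x)^3 - (2*(a:ℝ)+2)*(σ x)^2 + (a:ℝ)*((a:ℝ)+2)*(σ x) - 1 = 0 := by
    have := congrArg σ hx
    simpa [map_sub, map_add, map_mul, map_pow, map_one, map_intCast, map_ofNat] using this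
  have hgoal : σ (-1 + (((a : ℚ⟮ρ⟯)+2) * (w : ℚ⟮ρ⟯) + 1) * x - (w : ℚ⟮ρ⟯) * x^2)
      = -1 + (((a:ℝ)+2)*(w:ℝ)+1)*(σ x) - (w:ℝ)*(σ x)^2 := by
    simp [map_sub, map_add, map_mul, map_pow, map_one, map_intCast, map_ofNat, map_neg]
  rw [hgoal]
  have ha' : (7:ℝ) ≤ (a:ℝ) := by exact_mod_cast ha
  have hw1' : (a:ℝ) ≤ (w:ℝ) := by exact_mod_cast hw1
  have hw2' : (w:ℝ) ≤ 2*(a:ℝ) - 1 := by exact_mod_cast hw2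
  exact key_real (a:ℝ) (w:ℝ) (σ x) ha' hw1' hw2' h2
end
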